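/- Fix integers K, d ≥ 1 and real numbers C_1, C_2 with 0 < C_1 < d, 0 < C_2 < d and d < C_1 + C_2. For each integer G ≥ 2 define N(G) = ⌊C_1 K G⌋, M(G) = ⌊C_2 K G⌋, N_1(G) = min(G K d, N(G)), g_1(G) = ⌊G((G−1)Kd − M(G) + d)/(N_1(G) − Kd)⌋ (defined for all G large enough that N_1(G) > Kd), and D_low(G) = K·G·N_1(G)·g_1(G)·(M(G) − (G − g_1(G))Kd) − K·G². Then lim_{G→∞} D_low(G)/(G⁴K³) = (d − C_1)(d − C_2)²/C_1. -/

import Mathlib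

open Filter

lemma floor_div_nat_tendsto (x : ℕ → ℝ) (L : ℝ)
    (h : Tendsto (fun n : ℕ => x n / n) atTop (nhds L)) :
    Tendsto (fun n : ℕ => ((⌊x n⌋ : ℤ) : ℝ) / n) atTop (nhds L) := by
  have h0 : Tendsto (fun n : ℕ => x n / n - 1 / n) atTop (nhds L) := by
    have := h.sub tendsto_one_div_atTop_nhds_zero_nat
    simpa using this
  refine tendsto_of_tendsto_of_tendsto_of_le_of_le' h0 h ?_ ?_
  · filter_upwards [eventually_ge_atTop 1] with n hn
    have hn0 : (0:ℝ) < n := by exact_mod_cast hn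
    rw [div_sub_div_same]
    gcongr
    have := Int.sub_one_lt_floor (x n)
    linarith
  · filter_upwards [eventually_ge_atTop 1] with n hn
    have hn0 : (0:ℝ) < n := by exact_mod_cast hn
    gcongr
    exact Int.floor_le _

theorem d_low_asymptotics
    (K d : ℕ) (hK : 1 ≤ K) (hd : 1 ≤ d) (C1 C2 : ℝ)
    (hC1 : 0 < C1) (hC1d : C1 < d) (hC2 : 0 < C2) (hC2d : C2 < d)
    (hsum : (d : ℝ) < C1 + C2) :
    Tendsto (fun G : ℕ =>
      let Nf : ℤ := ⌊C1 * (K : ℝ) * G⌋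
      let Mf : ℤ := ⌊C2 * (K : ℝ) * G⌋
      let N1 : ℤ := min ((G : ℤ) * (K * d)) Nf
      let g1 : ℤ :=
        ⌊((G : ℝ) * (((G : ℝ) - 1) * ((K : ℝ) * d) - (Mf : ℝ) + d)) /
          ((N1 : ℝ) - (K : ℝ) * d)⌋
      let Dlow : ℤ :=
        (K : ℤ) * G * N1 * g1 * (Mf - ((G : ℤ) - g1) * (K * d)) -
          (K : ℤ) * (G : ℤ) ^ 2
      (Dlow : ℝ) / ((G : ℝ) ^ 4 * (K : ℝ) ^ 3))
      atTop (nhds ((d - C1) * (d - C2) ^ 2 / C1)) := by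
  have hK0 : (0:ℝ) < K := by exact_mod_cast hK
  have hd0 : (0:ℝ) < d := by exact_mod_cast hd
  have hKne : (K:ℝ) ≠ 0 := hK0.ne'
  have hC1ne : C1 ≠ 0 := hC1.ne'
  -- the min is always the floor
  have hmin : ∀ G : ℕ, min ((G : ℤ) * (K * d)) ⌊C1 * (K : ℝ) * G⌋ = ⌊C1 * (K : ℝ) * G⌋ := by
    intro G
    apply min_eq_right
    have h1 : C1 * (K:ℝ) * G ≤ (((G : ℤ) * (K * d) : ℤ) : ℝ) := by
      push_cast
      calc C1 * (K:ℝ) * G = C1 * ((K:ℝ) * G) := by ring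
        _ ≤ (d:ℝ) * ((K:ℝ) * G) := mul_le_mul_of_nonneg_right hC1d.le (by positivity)
        _ = (G:ℝ) * ((K:ℝ) * (d:ℝ)) := by ring
    have h2 := Int.floor_le_floor h1
    rwa [Int.floor_intCast] at h2
  have hone : Tendsto (fun G : ℕ => 1 / (G:ℝ)) atTop (nhds 0) :=
    tendsto_one_div_atTop_nhds_zero_nat
  -- nn
  have hnn : Tendsto (fun G : ℕ => ((⌊C1 * (K:ℝ) * G⌋ : ℤ) : ℝ) / G) atTop (nhds (C1 * K)) := by
    apply floor_div_nat_tendsto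
    apply Tendsto.congr' _ (tendsto_const_nhds (x := C1 * (K:ℝ)))
    filter_upwards [eventually_ge_atTop 1] with G hG
    have hG0 : (G:ℝ) ≠ 0 := by positivity
    field_simp
  have hmm : Tendsto (fun G : ℕ => ((⌊C2 * (K:ℝ) * G⌋ : ℤ) : ℝ) / G) atTop (nhds (C2 * K)) := by
    apply floor_div_nat_tendsto
    apply Tendsto.congr' _ (tendsto_const_nhds (x := C2 * (K:ℝ)))
    filter_upwards [eventually_ge_atTop 1] with G hG
    have hG0 : (G:ℝ) ≠ 0 := by positivity
    field_simp
  -- numerator and denominator of g1's argument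
  set A : ℕ → ℝ := fun G =>
    ((G : ℝ) - 1) * ((K : ℝ) * d) - ((⌊C2 * (K:ℝ) * G⌋ : ℤ) : ℝ) + d with hAdef
  set D : ℕ → ℝ := fun G => ((⌊C1 * (K:ℝ) * G⌋ : ℤ) : ℝ) - (K : ℝ) * d with hDdef
  have hA : Tendsto (fun G : ℕ => A G / G) atTop (nhds ((K:ℝ) * d - C2 * K)) := by
    have h1 : Tendsto (fun G : ℕ =>
        (1 - 1/(G:ℝ)) * ((K:ℝ) * d) - ((⌊C2 * (K:ℝ) * G⌋ : ℤ) : ℝ) / G + (d:ℝ) * (1/(G:ℝ)))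
        atTop (nhds ((1 - 0) * ((K:ℝ)*d) - C2 * K + (d:ℝ) * 0)) := by
      exact (((tendsto_const_nhds.sub hone).mul_const _).sub hmm).add (hone.const_mul _)
    have h2 : ((1:ℝ) - 0) * ((K:ℝ)*d) - C2 * K + (d:ℝ) * 0 = (K:ℝ) * d - C2 * K := by ring
    rw [h2] at h1
    apply Tendsto.congr' _ h1
    filter_upwards [eventually_ge_atTop 1] with G hG
    have hG0 : (G:ℝ) ≠ 0 := by positivity
    simp only [hAdef]
    field_simp
  have hD : Tendsto (fun G : ℕ => D G / G) atTop (nhds (C1 * K)) := by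
    have h1 : Tendsto (fun G : ℕ =>
        ((⌊C1 * (K:ℝ) * G⌋ : ℤ) : ℝ) / G - ((K:ℝ) * d) * (1/(G:ℝ)))
        atTop (nhds (C1 * K - ((K:ℝ)*d) * 0)) := hnn.sub (hone.const_mul _)
    have h2 : C1 * K - ((K:ℝ)*d) * 0 = C1 * K := by ring
    rw [h2] at h1
    apply Tendsto.congr' _ h1
    filter_upwards [eventually_ge_atTop 1] with G hG
    have hG0 : (G:ℝ) ≠ 0 := by positivity
    simp only [hDdef]
    field_simp
  have hDpos : ∀ᶠ G : ℕ in atTop, 0 < D G := by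
    have hev : ∀ᶠ G : ℕ in atTop, 0 < D G / G :=
      hD.eventually (eventually_gt_nhds (by positivity))
    filter_upwards [hev, eventually_ge_atTop 1] with G h1 h2
    have hG0 : (0:ℝ) < G := by exact_mod_cast h2
    by_contra h
    push_neg at h
    have : D G / G ≤ 0 := div_nonpos_of_nonpos_of_nonneg h hG0.le
    linarith
  -- g1 / G
  have hgg : Tendsto (fun G : ℕ =>
      ((⌊(G : ℝ) * A G / D G⌋ : ℤ) : ℝ) / G) atTop (nhds ((d - C2) / C1)) := by
    apply floor_div_nat_tendsto
    have hCKne : C1 * (K:ℝ) ≠ 0 := by positivity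
    have hq := hA.div hD hCKne
    have h2 : ((K:ℝ) * d - C2 * K) / (C1 * K) = ((d:ℝ) - C2) / C1 := by
      field_simp
    rw [h2] at hq
    apply Tendsto.congr' _ hq
    filter_upwards [eventually_ge_atTop 1, hDpos] with G hG hDG
    have hG0 : (G:ℝ) ≠ 0 := by positivity
    have hDne : D G ≠ 0 := hDG.ne'
    simp only [Pi.div_apply]
    field_simp
  -- 1/(G^2 K^2) → 0
  have hz : Tendsto (fun G : ℕ => 1 / ((G:ℝ)^2 * (K:ℝ)^2)) atTop (nhds 0) := by
    have h1 : Tendsto (fun G : ℕ => (1/(G:ℝ)) * (1/(G:ℝ)) * (1/(K:ℝ)^2)) atTop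
        (nhds ((0:ℝ) * 0 * (1/(K:ℝ)^2))) := (hone.mul hone).mul_const _
    have h2 : (0:ℝ) * 0 * (1/(K:ℝ)^2) = 0 := by ring
    rw [h2] at h1
    apply Tendsto.congr' _ h1
    filter_upwards [eventually_ge_atTop 1] with G hG
    have hG0 : (G:ℝ) ≠ 0 := by positivity
    field_simp
  -- main candidate
  have hmain : Tendsto (fun G : ℕ =>
      (((⌊C1 * (K:ℝ) * G⌋ : ℤ) : ℝ) / G) * (((⌊(G : ℝ) * A G / D G⌋ : ℤ) : ℝ) / G) *
        ((((⌊C2 * (K:ℝ) * G⌋ : ℤ) : ℝ) / G) +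
          ((((⌊(G : ℝ) * A G / D G⌋ : ℤ) : ℝ) / G) - 1) * ((K:ℝ) * d)) / (K:ℝ)^2
        - 1 / ((G:ℝ)^2 * (K:ℝ)^2))
      atTop (nhds ((d - C1) * (d - C2) ^ 2 / C1)) := by
    have h1 := (((hnn.mul hgg).mul
      (hmm.add ((hgg.sub (tendsto_const_nhds (x := (1:ℝ)))).mul_const ((K:ℝ) * d)))).div_const ((K:ℝ)^2)).sub hz
    have h2 : C1 * (K:ℝ) * ((d - C2)/C1) * (C2 * K + ((d - C2)/C1 - 1) * ((K:ℝ)*d)) / (K:ℝ)^2 - 0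
        = ((d:ℝ) - C1) * ((d:ℝ) - C2) ^ 2 / C1 := by
      field_simp
      ring
    rw [h2] at h1
    exact h1
  -- conclude
  apply Tendsto.congr' _ hmain
  filter_upwards [eventually_ge_atTop 1, hDpos] with G hG hDG
  have hG0 : (G:ℝ) ≠ 0 := by positivity
  simp only [hAdef, hDdef]
  rw [hmin G]
  push_cast
  field_simp
  ring
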